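/- Let φ be a norm on ℝ^n, C² away from 0, with φ² strongly convex. Then for every M > 0 the function p ↦ φ(p, -1) on ℝ^{n-1} is uniformly convex on {|p| ≤ M}: there exists λ(M) > 0 such that D²(p ↦ φ(p,-1)) ≥ λ(M)·Id on {|p| ≤ M}. -/

import Mathlib

open scoped RealInnerProductSpace

section GeneralLemmas
variable {F : Type*} [NormedAddCommGroup F] [InnerProductSpace ℝ F] [CompleteSpace F]

theorem aux_inner_gradient (f : F → ℝ) (x v : F) : ⟪gradient f x, v⟫ = fderiv ℝ f x v :=
  InnerProductSpace.toDual_symm_apply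

theorem aux_inner_fderiv_gradient (f : F → ℝ) (x : F) (v w : F) :
    ⟪fderiv ℝ (gradient f) x v, w⟫ = fderiv ℝ (fderiv ℝ f) x v w := by
  have h : gradient f = ⇑(InnerProductSpace.toDual ℝ F).symm ∘ fderiv ℝ f := rfl
  rw [h, LinearIsometryEquiv.comp_fderiv]
  exact InnerProductSpace.toDual_symm_apply

theorem aux_lower (M : ℝ) (hM : 0 < M) (p v : F) (hp : ‖p‖ ≤ M) (t : ℝ) :
    ‖v‖ ^ 2 ≤ (‖v - t • p‖ ^ 2 + t ^ 2) * (M + 1) ^ 2 := by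
  have hM1 : (0:ℝ) < M + 1 := by linarith
  set s : ℝ := ‖v‖ / (M + 1) with hsdef
  have hs : 0 ≤ s := div_nonneg (norm_nonneg v) hM1.le
  have hv : ‖v‖ = s * (M + 1) := by rw [hsdef]; field_simp
  have hv2 : ‖v‖ ^ 2 = s ^ 2 * (M + 1) ^ 2 := by rw [hv]; ring
  rcases le_or_gt s |t| with h | h
  · have h1 : s ^ 2 ≤ t ^ 2 := by nlinarith [abs_nonneg t, sq_abs t]
    nlinarith [hv2, mul_le_mul_of_nonneg_right h1 (sq_nonneg (M + 1)),
      mul_nonneg (sq_nonneg ‖v - t • p‖) (sq_nonneg (M + 1))]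
  · have h0 := norm_sub_norm_le v (t • p)
    have h1 : ‖v‖ - |t| * ‖p‖ ≤ ‖v - t • p‖ := by
      rw [norm_smul, Real.norm_eq_abs] at h0; linarith
    have h3 : |t| * ‖p‖ ≤ s * M := mul_le_mul h.le hp (norm_nonneg p) hs
    have hv' : ‖v‖ = s * M + s := by rw [hv]; ring
    have h2 : s ≤ ‖v - t • p‖ := by linarith
    have h4 : s ^ 2 ≤ ‖v - t • p‖ ^ 2 := by nlinarith
    nlinarith [hv2, mul_le_mul_of_nonneg_right h4 (sq_nonneg (M + 1)),
      mul_nonneg (sq_nonneg t) (sq_nonneg (M + 1))]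

end GeneralLemmas

section PhiLemmas
variable {F : Type*} [NormedAddCommGroup F] [InnerProductSpace ℝ F] [CompleteSpace F]
variable (φ : F → ℝ)
  (hφ0 : ∀ x, 0 ≤ φ x)
  (hφeq : ∀ x, φ x = 0 ↔ x = 0)
  (hhom : ∀ (c : ℝ) (x), φ (c • x) = |c| * φ x)
  (hsm : ContDiffOn ℝ 2 φ {x : F | x ≠ 0})

theorem aux_open : IsOpen {x : F | x ≠ 0} := isOpen_compl_singleton

include hsm in
theorem aux_diff {x : F} (hx : x ≠ 0) : DifferentiableAt ℝ φ x :=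
  (hsm.contDiffAt ((aux_open).mem_nhds hx)).differentiableAt two_ne_zero

include hsm in
theorem aux_diff2 {x : F} (hx : x ≠ 0) : DifferentiableAt ℝ (fderiv ℝ φ) x :=
  ((hsm.contDiffAt ((aux_open).mem_nhds hx)).fderiv_right (le_refl 2)).differentiableAt one_ne_zero

include hsm in
theorem aux_gdiff {x : F} (hx : x ≠ 0) : DifferentiableAt ℝ (gradient φ) x := by
  have h : gradient φ = ⇑(InnerProductSpace.toDual ℝ F).symm ∘ fderiv ℝ φ := rfl
  rw [h]
  exact ((InnerProductSpace.toDual ℝ F).symm.toContinuousLinearEquiv.differentiableAt).comp x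
    (aux_diff2 φ hsm hx)

include hhom hsm in
theorem aux_euler {x : F} (hx : x ≠ 0) : ⟪gradient φ x, x⟫ = φ x := by
  rw [aux_inner_gradient]
  have hline : HasDerivAt (fun t : ℝ => φ (t • x)) (fderiv ℝ φ x x) 1 := by
    have h1 : HasDerivAt (fun t : ℝ => t • x) ((1 : ℝ) • x) 1 := (hasDerivAt_id 1).smul_const x
    have h2 : HasFDerivAt φ (fderiv ℝ φ x) ((1 : ℝ) • x) := by
      rw [one_smul]; exact (aux_diff φ hsm hx).hasFDerivAt
    have h5 := h2.comp_hasDerivAt 1 h1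
    simp only [one_smul] at h5
    exact h5
  have heq : (fun t : ℝ => t * φ x) =ᶠ[nhds (1 : ℝ)] fun t : ℝ => φ (t • x) := by
    filter_upwards [isOpen_Ioi.mem_nhds (by norm_num : (1:ℝ) ∈ Set.Ioi (0:ℝ))] with t ht
    rw [hhom, abs_of_pos ht]
  have hline2 : HasDerivAt (fun t : ℝ => t * φ x) (fderiv ℝ φ x x) 1 :=
    hline.congr_of_eventuallyEq heq
  have hline3 : HasDerivAt (fun t : ℝ => t * φ x) (φ x) 1 := by
    simpa using (hasDerivAt_id (1:ℝ)).mul_const (φ x)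
  exact hline2.unique hline3

include hhom hsm in
theorem aux_fderiv_homog {c : ℝ} (hc : 0 < c) {x : F} (hx : x ≠ 0) :
    fderiv ℝ φ (c • x) = fderiv ℝ φ x := by
  have hcx : c • x ≠ 0 := smul_ne_zero hc.ne' hx
  have h1 : HasFDerivAt (fun y : F => φ (c • y))
      ((fderiv ℝ φ (c • x)).comp (c • ContinuousLinearMap.id ℝ F)) x := by
    have hs : HasFDerivAt (fun y : F => c • y) (c • ContinuousLinearMap.id ℝ F) x :=
      (hasFDerivAt_id x).const_smul c
    exact ((aux_diff φ hsm hcx).hasFDerivAt).comp x hs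
  have h2 : HasFDerivAt (fun y : F => φ (c • y)) (c • fderiv ℝ φ x) x := by
    have : HasFDerivAt (fun y : F => c * φ y) (c • fderiv ℝ φ x) x :=
      ((aux_diff φ hsm hx).hasFDerivAt).const_mul c
    apply this.congr_of_eventuallyEq
    filter_upwards with y
    rw [hhom, abs_of_pos hc]
  have h3 := h1.unique h2
  ext v
  have h4 := congrArg (fun L : F →L[ℝ] ℝ => L v) h3
  simp only [ContinuousLinearMap.coe_comp', Function.comp_apply, ContinuousLinearMap.coe_smul',
    Pi.smul_apply, ContinuousLinearMap.coe_id', id_eq, smul_eq_mul] at h4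
  have hcne : (c : ℝ) ≠ 0 := hc.ne'
  rw [map_smul] at h4
  field_simp at h4
  have h5 := mul_left_cancel₀ hcne h4
  linarith

include hhom hsm in
theorem aux_grad_homog {c : ℝ} (hc : 0 < c) {x : F} (hx : x ≠ 0) :
    gradient φ (c • x) = gradient φ x := by
  unfold gradient
  rw [aux_fderiv_homog φ hhom hsm hc hx]

include hhom hsm in
theorem aux_hess_x {x : F} (hx : x ≠ 0) : fderiv ℝ (gradient φ) x x = 0 := by
  have hline : HasDerivAt (fun t : ℝ => gradient φ (t • x)) (fderiv ℝ (gradient φ) x x) 1 := by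
    have h1 : HasDerivAt (fun t : ℝ => t • x) ((1 : ℝ) • x) 1 := (hasDerivAt_id 1).smul_const x
    have h2 : HasFDerivAt (gradient φ) (fderiv ℝ (gradient φ) x) ((1 : ℝ) • x) := by
      rw [one_smul]; exact (aux_gdiff φ hsm hx).hasFDerivAt
    have h5 := h2.comp_hasDerivAt 1 h1
    simp only [one_smul] at h5
    exact h5
  have heq : (fun _ : ℝ => gradient φ x) =ᶠ[nhds (1 : ℝ)] fun t : ℝ => gradient φ (t • x) := by
    filter_upwards [isOpen_Ioi.mem_nhds (by norm_num : (1:ℝ) ∈ Set.Ioi (0:ℝ))] with t ht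
    rw [aux_grad_homog φ hhom hsm ht hx]
  have hline2 : HasDerivAt (fun _ : ℝ => gradient φ x) (fderiv ℝ (gradient φ) x x) 1 :=
    hline.congr_of_eventuallyEq heq
  exact hline2.unique (hasDerivAt_const 1 _)

include hsm in
theorem aux_symm {x : F} (hx : x ≠ 0) (v w : F) :
    ⟪fderiv ℝ (gradient φ) x v, w⟫ = ⟪fderiv ℝ (gradient φ) x w, v⟫ := by
  rw [aux_inner_fderiv_gradient, aux_inner_fderiv_gradient]
  have hev : ∀ᶠ y in nhds x, HasFDerivAt φ (fderiv ℝ φ y) y := by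
    filter_upwards [(aux_open).mem_nhds hx] with y hy
    exact (aux_diff φ hsm hy).hasFDerivAt
  exact second_derivative_symmetric_of_eventually hev (aux_diff2 φ hsm hx).hasFDerivAt v w

include hsm in
theorem aux_grad_sq {y : F} (hy : y ≠ 0) :
    gradient (fun z => φ z ^ 2) y = (2 * φ y) • gradient φ y := by
  have hd := (aux_diff φ hsm hy).hasFDerivAt
  have h2' : HasFDerivAt (fun z => φ z * φ z) ((2 * φ y) • fderiv ℝ φ y) y := by
    apply (hd.mul hd).congr_fderiv
    ext z
    simp only [ContinuousLinearMap.add_apply, ContinuousLinearMap.coe_smul', Pi.smul_apply,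
      smul_eq_mul]
    ring
  have h2 : HasFDerivAt (fun z => φ z ^ 2) ((2 * φ y) • fderiv ℝ φ y) y :=
    h2'.congr_of_eventuallyEq (by filter_upwards with z; exact pow_two (φ z))
  unfold gradient
  rw [h2.fderiv, map_smul]

include hsm in
theorem aux_hess_sq {x : F} (hx : x ≠ 0) (v w : F) :
    ⟪fderiv ℝ (gradient fun y => φ y ^ 2) x v, w⟫ =
      2 * ⟪gradient φ x, v⟫ * ⟪gradient φ x, w⟫ +
        2 * φ x * ⟪fderiv ℝ (gradient φ) x v, w⟫ := by
  have hev : gradient (fun z => φ z ^ 2) =ᶠ[nhds x] fun y => (2 * φ y) • gradient φ y := by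
    filter_upwards [(aux_open).mem_nhds hx] with y hy
    exact aux_grad_sq φ hsm hy
  rw [hev.fderiv_eq]
  have hc : HasFDerivAt (fun y => 2 * φ y) ((2:ℝ) • fderiv ℝ φ x) x :=
    (aux_diff φ hsm hx).hasFDerivAt.const_mul 2
  have hG : HasFDerivAt (gradient φ) (fderiv ℝ (gradient φ) x) x :=
    (aux_gdiff φ hsm hx).hasFDerivAt
  have hs : HasFDerivAt (fun y => (2 * φ y) • gradient φ y) _ x := hc.smul hG
  rw [hs.fderiv]
  simp only [ContinuousLinearMap.add_apply, ContinuousLinearMap.coe_smul', Pi.smul_apply,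
    ContinuousLinearMap.smulRight_apply, smul_eq_mul]
  rw [inner_add_left, real_inner_smul_left, real_inner_smul_left]
  simp only [aux_inner_gradient]
  ring

include hφ0 hφeq in
theorem aux_phi_pos {x : F} (hx : x ≠ 0) : 0 < φ x :=
  (hφ0 x).lt_of_ne fun h => hx ((hφeq x).mp h.symm)

include hφ0 hφeq hhom hsm in
theorem aux_key (α : ℝ)
    (hconv : ∀ x : F, x ≠ 0 → ∀ v, α * ‖v‖ ^ 2 ≤ ⟪fderiv ℝ (gradient fun y => φ y ^ 2) x v, v⟫)
    {x : F} (hx : x ≠ 0) (w : F) :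
    α * ‖w - (⟪gradient φ x, w⟫ / φ x) • x‖ ^ 2 ≤
      2 * φ x * ⟪fderiv ℝ (gradient φ) x w, w⟫ := by
  have hφx : 0 < φ x := aux_phi_pos φ hφ0 hφeq hx
  set t : ℝ := ⟪gradient φ x, w⟫ / φ x with ht
  set w' : F := w - t • x with hw'
  have h3 : ⟪gradient φ x, w'⟫ = 0 := by
    rw [hw', inner_sub_right, real_inner_smul_right, aux_euler φ hhom hsm hx]
    rw [ht]; field_simp; ring
  have hHx : fderiv ℝ (gradient φ) x x = 0 := aux_hess_x φ hhom hsm hx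
  have h4 : ⟪fderiv ℝ (gradient φ) x w', w'⟫ = ⟪fderiv ℝ (gradient φ) x w, w⟫ := by
    have hw'' : fderiv ℝ (gradient φ) x w' = fderiv ℝ (gradient φ) x w := by
      rw [hw', map_sub, map_smul, hHx, smul_zero, sub_zero]
    have hwx : ⟪fderiv ℝ (gradient φ) x w, x⟫ = 0 := by
      rw [aux_symm φ hsm hx, hHx, inner_zero_left]
    rw [hw'', hw', inner_sub_right, real_inner_smul_right, hwx]
    ring
  have h1 := hconv x hx w'
  rw [aux_hess_sq φ hsm hx, h3, h4] at h1
  linarith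

end PhiLemmas

section Euclidean

theorem aux_coord_le_norm {m : ℕ} (x : EuclideanSpace ℝ (Fin m)) (i : Fin m) : |x i| ≤ ‖x‖ := by
  rw [EuclideanSpace.norm_eq]
  apply Real.abs_le_sqrt
  have h : x i ^ 2 = ‖x i‖ ^ 2 := by rw [Real.norm_eq_abs, sq_abs]
  rw [h]
  exact Finset.single_le_sum (f := fun j => ‖x j‖ ^ 2) (fun j _ => sq_nonneg _) (Finset.mem_univ i)

theorem aux_lin_bound {m : ℕ} (φ : EuclideanSpace ℝ (Fin m) → ℝ)
    (hφ0 : ∀ x, 0 ≤ φ x) (hφeq : ∀ x, φ x = 0 ↔ x = 0)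
    (hhom : ∀ (c : ℝ) (x), φ (c • x) = |c| * φ x)
    (htri : ∀ x y, φ (x + y) ≤ φ x + φ y) (x : EuclideanSpace ℝ (Fin m)) :
    φ x ≤ (∑ i, φ (EuclideanSpace.single i 1)) * ‖x‖ := by
  have hzero : φ 0 = 0 := (hφeq 0).mpr rfl
  have hx : x = ∑ i, x i • EuclideanSpace.single i 1 := by
    have h := (EuclideanSpace.basisFun (Fin m) ℝ).sum_repr x
    simp only [EuclideanSpace.basisFun_repr, EuclideanSpace.basisFun_apply] at h
    exact h.symm
  calc φ x = φ (∑ i, x i • EuclideanSpace.single i 1) := by rw [← hx]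
    _ ≤ ∑ i, φ (x i • EuclideanSpace.single i 1) :=
        Finset.le_sum_of_subadditive φ hzero.le htri _ _
    _ = ∑ i, |x i| * φ (EuclideanSpace.single i 1) := by simp only [hhom]
    _ ≤ ∑ i, ‖x‖ * φ (EuclideanSpace.single i 1) :=
        Finset.sum_le_sum fun i _ =>
          mul_le_mul_of_nonneg_right (aux_coord_le_norm x i) (hφ0 _)
    _ = (∑ i, φ (EuclideanSpace.single i 1)) * ‖x‖ := by
        rw [Finset.sum_mul]; exact Finset.sum_congr rfl fun i _ => mul_comm _ _

noncomputable def inclL (n : ℕ) : EuclideanSpace ℝ (Fin n) →ₗ[ℝ] EuclideanSpace ℝ (Fin (n+1)) where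
  toFun q := (EuclideanSpace.equiv (Fin (n+1)) ℝ).symm (Fin.snoc ((EuclideanSpace.equiv (Fin n) ℝ) q) 0)
  map_add' q r := by
    ext i
    induction i using Fin.lastCases <;>
      simp [Fin.snoc_castSucc, Fin.snoc_last]
  map_smul' c q := by
    ext i
    induction i using Fin.lastCases <;>
      simp [Fin.snoc_castSucc, Fin.snoc_last]

noncomputable def inclA (n : ℕ) : EuclideanSpace ℝ (Fin n) →L[ℝ] EuclideanSpace ℝ (Fin (n+1)) :=
  LinearMap.toContinuousLinearMap (inclL n)

noncomputable def bvec (n : ℕ) : EuclideanSpace ℝ (Fin (n+1)) :=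
  (EuclideanSpace.equiv (Fin (n+1)) ℝ).symm (Fin.snoc 0 (-1))

theorem inclA_castSucc (n : ℕ) (q : EuclideanSpace ℝ (Fin n)) (i : Fin n) :
    inclA n q (Fin.castSucc i) = q i := by
  simp [inclA, inclL, Fin.snoc_castSucc]

theorem inclA_last (n : ℕ) (q : EuclideanSpace ℝ (Fin n)) :
    inclA n q (Fin.last n) = 0 := by
  simp [inclA, inclL, Fin.snoc_last]

theorem bvec_castSucc (n : ℕ) (i : Fin n) : bvec n (Fin.castSucc i) = 0 := by
  simp [bvec, Fin.snoc_castSucc]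

theorem bvec_last (n : ℕ) : bvec n (Fin.last n) = -1 := by
  simp [bvec, Fin.snoc_last]

theorem inner_inclA_bvec (n : ℕ) (u : EuclideanSpace ℝ (Fin n)) : ⟪inclA n u, bvec n⟫ = 0 := by
  rw [PiLp.inner_apply, Fin.sum_univ_castSucc]
  simp [inclA_castSucc, inclA_last, bvec_castSucc, bvec_last]

theorem norm_bvec (n : ℕ) : ‖bvec n‖ = 1 := by
  rw [EuclideanSpace.norm_eq, Fin.sum_univ_castSucc]
  simp [bvec_castSucc, bvec_last]

theorem norm_inclA (n : ℕ) (v : EuclideanSpace ℝ (Fin n)) : ‖inclA n v‖ = ‖v‖ := by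
  rw [EuclideanSpace.norm_eq, Fin.sum_univ_castSucc, EuclideanSpace.norm_eq]
  simp [inclA_castSucc, inclA_last]

theorem snoc_eq (n : ℕ) (q : EuclideanSpace ℝ (Fin n)) :
    (EuclideanSpace.equiv (Fin (n+1)) ℝ).symm
      (Fin.snoc (EuclideanSpace.equiv (Fin n) ℝ q) (-1 : ℝ)) = inclA n q + bvec n := by
  ext i
  induction i using Fin.lastCases with
  | last => simp [inclA_last, bvec_last, Fin.snoc_last]
  | cast i => simp [inclA_castSucc, bvec_castSucc, Fin.snoc_castSucc]

theorem xq_ne (n : ℕ) (q : EuclideanSpace ℝ (Fin n)) : inclA n q + bvec n ≠ 0 := by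
  intro h
  have h2 := congrArg (fun z : EuclideanSpace ℝ (Fin (n+1)) => z (Fin.last n)) h
  simp [PiLp.add_apply, inclA_last, bvec_last] at h2

theorem aux_wnorm (n : ℕ) (p v : EuclideanSpace ℝ (Fin n)) (t : ℝ) :
    ‖inclA n v - t • (inclA n p + bvec n)‖ ^ 2 = ‖v - t • p‖ ^ 2 + t ^ 2 := by
  have h1 : inclA n v - t • (inclA n p + bvec n) = inclA n (v - t • p) - t • bvec n := by
    rw [map_sub, map_smul, smul_add]; abel
  rw [h1, norm_sub_sq_real, real_inner_smul_right, inner_inclA_bvec, norm_smul, norm_inclA,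
    norm_bvec, Real.norm_eq_abs]
  simp [sq_abs]

theorem aux_xnorm (n : ℕ) (M : ℝ) (hM : 0 ≤ M) (p : EuclideanSpace ℝ (Fin n)) (hp : ‖p‖ ≤ M) :
    ‖inclA n p + bvec n‖ ≤ M + 1 := by
  have h := norm_add_sq_real (inclA n p) (bvec n)
  rw [inner_inclA_bvec, norm_inclA, norm_bvec] at h
  nlinarith [norm_nonneg (inclA n p + bvec n), norm_nonneg p]

variable (n : ℕ) (φ : EuclideanSpace ℝ (Fin (n+1)) → ℝ)
  (hsm : ContDiffOn ℝ 2 φ {x : EuclideanSpace ℝ (Fin (n+1)) | x ≠ 0})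

include hsm in
theorem aux_grad_comp (q : EuclideanSpace ℝ (Fin n)) :
    gradient (fun r => φ (inclA n r + bvec n)) q =
      ContinuousLinearMap.adjoint (inclA n) (gradient φ (inclA n q + bvec n)) := by
  have haff : HasFDerivAt (fun r : EuclideanSpace ℝ (Fin n) => inclA n r + bvec n) (inclA n) q :=
    (inclA n).hasFDerivAt.add_const (bvec n)
  have hfd : fderiv ℝ (fun r => φ (inclA n r + bvec n)) q =
      (fderiv ℝ φ (inclA n q + bvec n)).comp (inclA n) :=
    ((aux_diff φ hsm (xq_ne n q)).hasFDerivAt.comp q haff).fderiv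
  apply ext_inner_right ℝ
  intro u
  rw [aux_inner_gradient, hfd, ContinuousLinearMap.adjoint_inner_left, aux_inner_gradient]
  rfl

include hsm in
theorem aux_hess_comp (p v : EuclideanSpace ℝ (Fin n)) :
    ⟪fderiv ℝ (gradient (fun r => φ (inclA n r + bvec n))) p v, v⟫ =
      ⟪fderiv ℝ (gradient φ) (inclA n p + bvec n) (inclA n v), inclA n v⟫ := by
  have haff : HasFDerivAt (fun r : EuclideanSpace ℝ (Fin n) => inclA n r + bvec n) (inclA n) p :=
    (inclA n).hasFDerivAt.add_const (bvec n)
  have hg : gradient (fun r => φ (inclA n r + bvec n)) =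
      fun q => ContinuousLinearMap.adjoint (inclA n) (gradient φ (inclA n q + bvec n)) :=
    funext fun q => aux_grad_comp n φ hsm q
  have hcomp : HasFDerivAt (fun q : EuclideanSpace ℝ (Fin n) => gradient φ (inclA n q + bvec n))
      ((fderiv ℝ (gradient φ) (inclA n p + bvec n)).comp (inclA n)) p :=
    by have h := (aux_gdiff φ hsm (xq_ne n p)).hasFDerivAt.comp p haff; exact h
  have h2 : HasFDerivAt (fun q : EuclideanSpace ℝ (Fin n) =>
        ContinuousLinearMap.adjoint (inclA n) (gradient φ (inclA n q + bvec n)))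
      ((ContinuousLinearMap.adjoint (inclA n)).comp
        ((fderiv ℝ (gradient φ) (inclA n p + bvec n)).comp (inclA n))) p :=
    (ContinuousLinearMap.adjoint (inclA n)).hasFDerivAt.comp p hcomp
  rw [hg, h2.fderiv]
  simp [ContinuousLinearMap.adjoint_inner_left]

end Euclidean

theorem stmt17 (n : ℕ) (φ : EuclideanSpace ℝ (Fin (n + 1)) → ℝ)
    (hφ0 : ∀ x, 0 ≤ φ x) (hφeq : ∀ x, φ x = 0 ↔ x = 0)
    (hhom : ∀ (c : ℝ) (x), φ (c • x) = |c| * φ x)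
    (htri : ∀ x y, φ (x + y) ≤ φ x + φ y)
    (hsm : ContDiffOn ℝ 2 φ {x : EuclideanSpace ℝ (Fin (n + 1)) | x ≠ 0})
    (α : ℝ) (hα : 0 < α)
    (hconv : ∀ x : EuclideanSpace ℝ (Fin (n + 1)), x ≠ 0 → ∀ v,
      α * ‖v‖ ^ 2 ≤ ⟪fderiv ℝ (gradient fun y => φ y ^ 2) x v, v⟫) :
    ∀ M : ℝ, 0 < M → ∃ lam : ℝ, 0 < lam ∧
      ∀ p : EuclideanSpace ℝ (Fin n), ‖p‖ ≤ M → ∀ v,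
        lam * ‖v‖ ^ 2 ≤
          ⟪fderiv ℝ (gradient fun q : EuclideanSpace ℝ (Fin n) =>
              φ ((EuclideanSpace.equiv (Fin (n + 1)) ℝ).symm
                (Fin.snoc (EuclideanSpace.equiv (Fin n) ℝ q) (-1 : ℝ)))) p v,
            v⟫ := by
  intro M hM
  set C : ℝ := (∑ i, φ (EuclideanSpace.single i 1)) + 1 with hC
  have hCsum : 0 ≤ ∑ i : Fin (n+1), φ (EuclideanSpace.single i 1) :=
    Finset.sum_nonneg fun i _ => hφ0 _
  have hCpos : 0 < C := by linarith
  have hM1 : (0:ℝ) < M + 1 := by linarith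
  refine ⟨α / (2 * C * (M + 1) ^ 3), by positivity, ?_⟩
  intro p hp v
  have hfun : (fun q : EuclideanSpace ℝ (Fin n) =>
      φ ((EuclideanSpace.equiv (Fin (n + 1)) ℝ).symm
        (Fin.snoc (EuclideanSpace.equiv (Fin n) ℝ q) (-1 : ℝ)))) =
      fun q => φ (inclA n q + bvec n) := funext fun q => by rw [snoc_eq]
  rw [hfun, aux_hess_comp n φ hsm p v]
  set x : EuclideanSpace ℝ (Fin (n+1)) := inclA n p + bvec n with hxdef
  have hx : x ≠ 0 := xq_ne n p
  have hφx : 0 < φ x := aux_phi_pos φ hφ0 hφeq hx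
  set w : EuclideanSpace ℝ (Fin (n+1)) := inclA n v with hwdef
  set t : ℝ := ⟪gradient φ x, w⟫ / φ x with htdef
  have key := aux_key φ hφ0 hφeq hhom hsm α hconv hx w
  have hwn : ‖w - t • x‖ ^ 2 = ‖v - t • p‖ ^ 2 + t ^ 2 := aux_wnorm n p v t
  have hlow : ‖v‖ ^ 2 ≤ (‖v - t • p‖ ^ 2 + t ^ 2) * (M + 1) ^ 2 :=
    aux_lower M hM p v hp t
  have hφup : φ x ≤ C * (M + 1) := by
    have h1 := aux_lin_bound φ hφ0 hφeq hhom htri x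
    have h2 : ‖x‖ ≤ M + 1 := aux_xnorm n M hM.le p hp
    have h3 : (∑ i, φ (EuclideanSpace.single i 1)) * ‖x‖ ≤ C * (M + 1) := by
      apply mul_le_mul (by linarith) h2 (norm_nonneg x) hCpos.le
    linarith
  set Q : ℝ := ⟪fderiv ℝ (gradient φ) x w, w⟫ with hQdef
  have key2 : α * (‖v - t • p‖ ^ 2 + t ^ 2) ≤ 2 * φ x * Q := by rw [← hwn]; exact key
  have hQ0 : 0 ≤ Q := by nlinarith [sq_nonneg ‖v - t • p‖, sq_nonneg t]
  rw [div_mul_eq_mul_div, div_le_iff₀ (by positivity)]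
  calc α * ‖v‖ ^ 2 ≤ α * ((‖v - t • p‖ ^ 2 + t ^ 2) * (M + 1) ^ 2) :=
        mul_le_mul_of_nonneg_left hlow hα.le
    _ = (α * (‖v - t • p‖ ^ 2 + t ^ 2)) * (M + 1) ^ 2 := by ring
    _ ≤ (2 * φ x * Q) * (M + 1) ^ 2 := mul_le_mul_of_nonneg_right key2 (sq_nonneg _)
    _ ≤ (2 * (C * (M + 1)) * Q) * (M + 1) ^ 2 :=
        mul_le_mul_of_nonneg_right
          (mul_le_mul_of_nonneg_right (by linarith : 2 * φ x ≤ 2 * (C * (M + 1))) hQ0)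
          (sq_nonneg (M + 1))
    _ = Q * (2 * C * (M + 1) ^ 3) := by ring
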